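/- The generalized exponential correlation function in one dimension, R(x,u) = exp(-θ|x-u|^p) with θ ≥ 0 and 0 < p ≤ 2, is a positive semidefinite kernel on ℝ: for any finite set of points x^(1),...,x^(n) ∈ ℝ and real coefficients c_1,...,c_n, the sum ∑_{i,j} c_i c_j exp(-θ|x^(i)-x^(j)|^p) is nonnegative. -/

import Mathlib

open Real MeasureTheory Set Finset Filter Matrix

/-- Sum-form positive semidefiniteness. -/
def SF {n : ℕ} (A : Fin n → Fin n → ℝ) : Prop :=
  ∀ c : Fin n → ℝ, 0 ≤ ∑ i, ∑ j, c i * c j * A i j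

/-- Gram matrix structure. -/
def IsGram {n : ℕ} (A : Fin n → Fin n → ℝ) : Prop :=
  ∃ (ι : Type) (_ : Fintype ι) (v : ι → Fin n → ℝ), ∀ i j, A i j = ∑ k, v k i * v k j

lemma sum_sum_mul {n : ℕ} (a b : Fin n → ℝ) :
    ∑ i, ∑ j, a i * b j = (∑ i, a i) * (∑ j, b j) :=
  (Finset.sum_mul_sum _ _ _ _).symm

lemma sf_of_gram {n : ℕ} {A : Fin n → Fin n → ℝ} (h : IsGram A) : SF A := by
  rintro c
  obtain ⟨ι, _, v, hv⟩ := h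
  have h1 : ∀ k : ι, (∑ i, c i * v k i) ^ 2 = ∑ i, ∑ j, c i * c j * (v k i * v k j) := by
    intro k; rw [sq, Finset.sum_mul_sum]
    exact Finset.sum_congr rfl fun i _ => Finset.sum_congr rfl fun j _ => by ring
  have key : ∑ i, ∑ j, c i * c j * A i j = ∑ k : ι, (∑ i, c i * v k i) ^ 2 := by
    simp_rw [h1, hv, Finset.mul_sum]
    exact (Finset.sum_congr rfl fun i _ => Finset.sum_comm).trans Finset.sum_comm
  rw [key]
  exact Finset.sum_nonneg fun k _ => sq_nonneg _

open scoped MatrixOrder in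
lemma gram_of_sf {n : ℕ} {A : Fin n → Fin n → ℝ} (hs : ∀ i j, A i j = A j i)
    (h : SF A) : IsGram A := by
  have hpsd : (Matrix.of A).PosSemidef := by
    rw [Matrix.posSemidef_iff_dotProduct_mulVec]
    constructor
    · ext i j
      simpa [Matrix.conjTranspose_apply] using hs j i
    · intro c
      have hd : dotProduct (star c) ((Matrix.of A).mulVec c)
          = ∑ i, ∑ j, c i * c j * A i j := by
        simp only [dotProduct, Matrix.mulVec, Matrix.of_apply, star_trivial,
          Finset.mul_sum]
        exact Finset.sum_congr rfl fun i _ => Finset.sum_congr rfl fun j _ => by ring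
      rw [hd]
      exact h c
  obtain ⟨B, hB⟩ := CStarAlgebra.nonneg_iff_eq_star_mul_self.mp hpsd.nonneg
  refine ⟨Fin n, inferInstance, fun k i => B k i, fun i j => ?_⟩
  have := congrFun (congrFun hB i) j
  simpa [Matrix.mul_apply, Matrix.conjTranspose_apply, Matrix.star_eq_conjTranspose] using this

lemma gram_one {n : ℕ} : IsGram (fun (_ _ : Fin n) => (1 : ℝ)) :=
  ⟨PUnit, inferInstance, fun _ _ => 1, fun i j => by simp⟩

lemma gram_mul {n : ℕ} {A B : Fin n → Fin n → ℝ} (hA : IsGram A) (hB : IsGram B) :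
    IsGram (fun i j => A i j * B i j) := by
  obtain ⟨ι, _, v, hv⟩ := hA
  obtain ⟨κ, _, w, hw⟩ := hB
  refine ⟨ι × κ, inferInstance, fun kl i => v kl.1 i * w kl.2 i, fun i j => ?_⟩
  simp only [hv, hw, Finset.sum_mul_sum, Fintype.sum_prod_type]
  exact Finset.sum_congr rfl fun k _ => Finset.sum_congr rfl fun l _ => by ring

lemma gram_pow {n : ℕ} {A : Fin n → Fin n → ℝ} (hA : IsGram A) (k : ℕ) :
    IsGram (fun i j => A i j ^ k) := by
  induction k with
  | zero => simpa using gram_one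
  | succ m ih =>
      simp_rw [pow_succ]
      exact gram_mul ih hA

lemma gram_smul {n : ℕ} {A : Fin n → Fin n → ℝ} (hA : IsGram A) {a : ℝ} (ha : 0 ≤ a) :
    IsGram (fun i j => a * A i j) := by
  obtain ⟨ι, _, v, hv⟩ := hA
  refine ⟨ι, inferInstance, fun k i => Real.sqrt a * v k i, fun i j => ?_⟩
  simp only [hv, Finset.mul_sum]
  exact Finset.sum_congr rfl fun k _ => by
    rw [show Real.sqrt a * v k i * (Real.sqrt a * v k j)
      = (Real.sqrt a * Real.sqrt a) * (v k i * v k j) by ring, Real.mul_self_sqrt ha]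

lemma gram_zero {n : ℕ} : IsGram (fun (_ _ : Fin n) => (0 : ℝ)) :=
  ⟨PEmpty, inferInstance, fun k _ => k.elim, fun i j => by simp⟩

lemma gram_add {n : ℕ} {A B : Fin n → Fin n → ℝ} (hA : IsGram A) (hB : IsGram B) :
    IsGram (fun i j => A i j + B i j) := by
  obtain ⟨ι, _, v, hv⟩ := hA
  obtain ⟨κ, _, w, hw⟩ := hB
  refine ⟨ι ⊕ κ, inferInstance, Sum.elim v w, fun i j => ?_⟩
  simp only [hv, hw, Fintype.sum_sum_type]
  simp

lemma gram_finsum {n : ℕ} {α : Type*} (s : Finset α) (F : α → Fin n → Fin n → ℝ)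
    (h : ∀ a ∈ s, IsGram (F a)) : IsGram (fun i j => ∑ a ∈ s, F a i j) := by
  classical
  induction s using Finset.induction with
  | empty => simpa using gram_zero
  | insert a s hx ih =>
      simp_rw [Finset.sum_insert hx]
      exact gram_add (h a (Finset.mem_insert_self a s))
        (ih fun b hb => h b (Finset.mem_insert_of_mem hb))

lemma sf_exp {n : ℕ} {B : Fin n → Fin n → ℝ} (hB : IsGram B) :
    SF (fun i j => Real.exp (B i j)) := by
  intro c
  have hN : ∀ N : ℕ, 0 ≤ ∑ i, ∑ j, c i * c j *
      (∑ k ∈ Finset.range N, B i j ^ k / (Nat.factorial k : ℝ)) := by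
    intro N
    refine sf_of_gram (gram_finsum (Finset.range N)
      (fun k i j => B i j ^ k / (Nat.factorial k : ℝ)) fun k _ => ?_) c
    have := gram_smul (gram_pow hB k) (a := ((Nat.factorial k : ℝ))⁻¹) (by positivity)
    simpa [div_eq_inv_mul] using this
  have hlim : Tendsto (fun N => ∑ i, ∑ j, c i * c j *
      (∑ k ∈ Finset.range N, B i j ^ k / (Nat.factorial k : ℝ)))
      atTop (nhds (∑ i, ∑ j, c i * c j * Real.exp (B i j))) := by
    refine tendsto_finset_sum _ fun i _ => tendsto_finset_sum _ fun j _ =>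
      Tendsto.const_mul _ ?_
    have h1 := (NormedSpace.expSeries_div_hasSum_exp (B i j)).tendsto_sum_nat
    rwa [← Real.exp_eq_exp_ℝ] at h1
  exact ge_of_tendsto' hlim hN
open Real MeasureTheory Set Finset Filter

lemma one_sub_cos_le_half_sq (x : ℝ) : 1 - Real.cos x ≤ x ^ 2 / 2 := by
  have h1 : Real.sin (x/2) ^ 2 ≤ (x/2) ^ 2 := Real.sin_sq_le_sq
  have h2 : Real.cos (2 * (x/2)) = 2 * Real.cos (x/2) ^ 2 - 1 := Real.cos_two_mul _
  have h3 : Real.sin (x/2) ^ 2 + Real.cos (x/2) ^ 2 = 1 := Real.sin_sq_add_cos_sq _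
  have h4 : (2:ℝ) * (x/2) = x := by ring
  rw [h4] at h2
  nlinarith

lemma contOn (p a : ℝ) : ContinuousOn (fun t : ℝ => (1 - Real.cos (a*t)) * t ^ (-1-p)) (Ioi 0) := by
  intro t ht
  have h1 : ContinuousAt (fun t : ℝ => (1 - Real.cos (a*t))) t := by fun_prop
  have h2 : ContinuousAt (fun t : ℝ => t ^ (-1-p)) t :=
    Real.continuousAt_rpow_const t _ (Or.inl (ne_of_gt ht))
  exact (h1.mul h2).continuousWithinAt

lemma integ {p : ℝ} (hp0 : 0 < p) (hp2 : p < 2) (a : ℝ) :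
    IntegrableOn (fun t => (1 - Real.cos (a*t)) * t ^ (-1-p)) (Ioi (0:ℝ)) := by
  have hIoc : IntegrableOn (fun t => (1 - Real.cos (a*t)) * t ^ (-1-p)) (Ioc (0:ℝ) 1) := by
    have hg : IntegrableOn (fun t : ℝ => a ^ 2 / 2 * t ^ (1-p)) (Ioc (0:ℝ) 1) := by
      have := intervalIntegral.intervalIntegrable_rpow' (a := (0:ℝ)) (b := 1) (r := 1-p) (by linarith)
      rw [intervalIntegrable_iff_integrableOn_Ioc_of_le (by norm_num : (0:ℝ) ≤ 1)] at this
      exact this.const_mul _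
    refine Integrable.mono hg (((contOn p a).mono Ioc_subset_Ioi_self).aestronglyMeasurable
      measurableSet_Ioc) ?_
    refine (ae_restrict_iff' measurableSet_Ioc).2 (ae_of_all _ fun t ht => ?_)
    have ht0 : 0 < t := ht.1
    have hrp : (0:ℝ) ≤ t ^ (-1-p) := (Real.rpow_pos_of_pos ht0 _).le
    have hcos : 0 ≤ 1 - Real.cos (a*t) := by nlinarith [Real.cos_le_one (a*t)]
    have hb : 1 - Real.cos (a*t) ≤ a^2 * t^2 / 2 := by
      have := one_sub_cos_le_half_sq (a*t); nlinarith
    rw [Real.norm_eq_abs, Real.norm_eq_abs, abs_of_nonneg (mul_nonneg hcos hrp),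
      abs_of_nonneg (by positivity)]
    calc (1 - Real.cos (a*t)) * t ^ (-1-p) ≤ (a^2 * t^2 / 2) * t ^ (-1-p) := by
          exact mul_le_mul_of_nonneg_right hb hrp
      _ = a^2/2 * t ^ (1-p) := by
          rw [show t^2 = t ^ (2:ℝ) by rw [← Real.rpow_natCast t 2]; norm_num,
            show a^2 * t ^ (2:ℝ) / 2 * t ^ (-1-p) = a^2/2 * (t ^ (2:ℝ) * t ^ (-1-p)) by ring,
            ← Real.rpow_add ht0]
          congr 1
          ring
  have hIoi : IntegrableOn (fun t => (1 - Real.cos (a*t)) * t ^ (-1-p)) (Ioi (1:ℝ)) := by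
    have hg : IntegrableOn (fun t : ℝ => 2 * t ^ (-1-p)) (Ioi (1:ℝ)) :=
      (integrableOn_Ioi_rpow_of_lt (by linarith) one_pos).const_mul _
    refine Integrable.mono hg (((contOn p a).mono (Ioi_subset_Ioi zero_le_one)).aestronglyMeasurable
      measurableSet_Ioi) ?_
    refine (ae_restrict_iff' measurableSet_Ioi).2 (ae_of_all _ fun t ht => ?_)
    have ht0 : (0:ℝ) < t := lt_trans one_pos ht
    have hrp : (0:ℝ) ≤ t ^ (-1-p) := (Real.rpow_pos_of_pos ht0 _).le
    have hcos : 0 ≤ 1 - Real.cos (a*t) := by nlinarith [Real.cos_le_one (a*t)]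
    rw [Real.norm_eq_abs, Real.norm_eq_abs, abs_of_nonneg (mul_nonneg hcos hrp),
      abs_of_nonneg (by positivity)]
    exact mul_le_mul_of_nonneg_right (by nlinarith [Real.neg_one_le_cos (a*t)]) hrp
  have := hIoc.union hIoi
  rwa [Set.Ioc_union_Ioi_eq_Ioi (by norm_num : (0:ℝ) ≤ 1)] at this

noncomputable def Cp (p : ℝ) : ℝ := ∫ t in Ioi (0:ℝ), (1 - Real.cos t) * t ^ (-1-p)

lemma Cp_pos {p : ℝ} (hp0 : 0 < p) (hp2 : p < 2) : 0 < Cp p := by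
  have hint : IntegrableOn (fun t => (1 - Real.cos t) * t ^ (-1-p)) (Ioi (0:ℝ)) := by
    have := integ hp0 hp2 1; simpa using this
  have hnn : 0 ≤ᵐ[volume.restrict (Ioi (0:ℝ))] fun t => (1 - Real.cos t) * t ^ (-1-p) := by
    refine (ae_restrict_iff' measurableSet_Ioi).2 (ae_of_all _ fun t ht => ?_)
    have : (0:ℝ) < t := ht
    exact mul_nonneg (by nlinarith [Real.cos_le_one t]) (Real.rpow_pos_of_pos this _).le
  rw [Cp, setIntegral_pos_iff_support_of_nonneg_ae hnn hint]
  refine lt_of_lt_of_le ?_ (measure_mono (?_ : Ioo 0 π ⊆ _))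
  · rw [Real.volume_Ioo]
    simp [ENNReal.ofReal_pos, Real.pi_pos]
  · intro t ht
    refine ⟨?_, ht.1⟩
    have hc : Real.cos t < 1 := by
      have := Real.cos_lt_cos_of_nonneg_of_le_pi le_rfl ht.2.le ht.1
      simpa using this
    have : (1 - Real.cos t) * t ^ (-1-p) ≠ 0 :=
      ne_of_gt (mul_pos (by linarith) (Real.rpow_pos_of_pos ht.1 _))
    exact this

lemma scale {p : ℝ} (hp0 : 0 < p) (hp2 : p < 2) (d : ℝ) :
    ∫ t in Ioi (0:ℝ), (1 - Real.cos (d*t)) * t ^ (-1-p) = |d| ^ p * Cp p := by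
  rcases eq_or_ne d 0 with rfl | hd
  · simp [Real.zero_rpow (ne_of_gt hp0)]
  · have hb : 0 < |d| := abs_pos.2 hd
    have step1 : ∫ t in Ioi (0:ℝ), (1 - Real.cos (d*t)) * t ^ (-1-p)
        = ∫ t in Ioi (0:ℝ), |d| ^ (1+p) * ((1 - Real.cos (|d| * t)) * ((|d| * t)) ^ (-1-p)) := by
      refine setIntegral_congr_fun measurableSet_Ioi fun t ht => ?_
      have ht0 : (0:ℝ) < t := ht
      have hcos : Real.cos (d*t) = Real.cos (|d| * t) := by
        rcases abs_choice d with h | h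
        · rw [h]
        · rw [h]; rw [neg_mul, Real.cos_neg]
      rw [hcos, Real.mul_rpow hb.le ht0.le,
        show |d| ^ (1+p) * ((1 - Real.cos (|d| * t)) * (|d| ^ (-1-p) * t ^ (-1-p)))
          = (|d| ^ (1+p) * |d| ^ (-1-p)) * ((1 - Real.cos (|d| * t)) * t ^ (-1-p)) by ring,
        ← Real.rpow_add hb]
      norm_num
    rw [step1, integral_const_mul,
      MeasureTheory.integral_comp_mul_left_Ioi (fun u => (1 - Real.cos u) * u ^ (-1-p)) 0 hb]
    rw [mul_zero, smul_eq_mul, ← mul_assoc]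
    congr 1
    rw [← Real.rpow_neg_one |d|, ← Real.rpow_add hb]
    ring_nf
lemma sum_sum_mul' {n : ℕ} (a b : Fin n → ℝ) :
    ∑ i, ∑ j, a i * b j = (∑ i, a i) * (∑ j, b j) :=
  (Finset.sum_mul_sum _ _ _ _).symm

lemma trig_sum {n : ℕ} (x c : Fin n → ℝ) (t : ℝ) :
    ∑ i, ∑ j, c i * c j * (1 - Real.cos ((x i - x j) * t))
      = (∑ i, c i) ^ 2 - ((∑ i, c i * Real.cos (t * x i)) ^ 2
          + (∑ i, c i * Real.sin (t * x i)) ^ 2) := by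
  have expand : ∀ i j : Fin n, c i * c j * (1 - Real.cos ((x i - x j) * t))
      = c i * c j - ((c i * Real.cos (t * x i)) * (c j * Real.cos (t * x j))
        + (c i * Real.sin (t * x i)) * (c j * Real.sin (t * x j))) := by
    intro i j
    rw [show (x i - x j) * t = t * x i - t * x j by ring, Real.cos_sub]
    ring
  simp_rw [expand, Finset.sum_sub_distrib, Finset.sum_add_distrib, sum_sum_mul']
  ring
lemma nd {p : ℝ} (hp0 : 0 < p) (hp2 : p ≤ 2) {n : ℕ} (x c : Fin n → ℝ)
    (hc : ∑ i, c i = 0) : ∑ i, ∑ j, c i * c j * |x i - x j| ^ p ≤ 0 := by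
  rcases lt_or_eq_of_le hp2 with hlt | rfl
  · set S := ∑ i, ∑ j, c i * c j * |x i - x j| ^ p with hS
    have key : S * Cp p = ∫ t in Ioi (0:ℝ),
        ∑ i, ∑ j, c i * c j * ((1 - Real.cos ((x i - x j) * t)) * t ^ (-1-p)) := by
      have hmt : ∀ d : ℝ, (fun t : ℝ => (1 - Real.cos (d * t)) * t ^ (-1-p))
          = fun t => (1 - Real.cos (d * t)) * t ^ (-1-p) := fun _ => rfl
      rw [hS, Finset.sum_mul,
        MeasureTheory.integral_finset_sum _ (fun i _ => integrable_finset_sum _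
          (fun j _ => ((integ hp0 hlt (x i - x j)).const_mul _)))]
      refine Finset.sum_congr rfl fun i _ => ?_
      rw [Finset.sum_mul,
        MeasureTheory.integral_finset_sum _ (fun j _ => ((integ hp0 hlt (x i - x j)).const_mul _))]
      refine Finset.sum_congr rfl fun j _ => ?_
      rw [MeasureTheory.integral_const_mul, mul_assoc (c i * c j) (|x i - x j| ^ p) (Cp p),
        ← scale hp0 hlt (x i - x j)]
    have hle : S * Cp p ≤ 0 := by
      rw [key]
      refine setIntegral_nonpos measurableSet_Ioi fun t ht => ?_
      have ht0 : (0:ℝ) < t := ht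
      have step : ∑ i, ∑ j, c i * c j * ((1 - Real.cos ((x i - x j) * t)) * t ^ (-1-p))
          = (∑ i, ∑ j, c i * c j * (1 - Real.cos ((x i - x j) * t))) * t ^ (-1-p) := by
        rw [Finset.sum_mul]
        refine Finset.sum_congr rfl fun i _ => ?_
        rw [Finset.sum_mul]
        exact Finset.sum_congr rfl fun j _ => by ring
      rw [step, trig_sum x c t, hc]
      refine mul_nonpos_iff.mpr (Or.inr ⟨?_, (Real.rpow_pos_of_pos ht0 _).le⟩)
      nlinarith [sq_nonneg (∑ i, c i * Real.cos (t * x i)),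
        sq_nonneg (∑ i, c i * Real.sin (t * x i))]
    nlinarith [Cp_pos hp0 hlt]
  · have habs : ∀ i j : Fin n, |x i - x j| ^ (2:ℝ) = (x i - x j) ^ 2 := fun i j => by
      rw [show ((2:ℝ)) = ((2:ℕ):ℝ) by norm_num, Real.rpow_natCast, sq_abs]
    simp_rw [habs]
    have expand : ∀ i j : Fin n, c i * c j * (x i - x j) ^ 2
        = (c i * x i ^ 2) * c j + c i * (c j * x j ^ 2) - (2 * (c i * x i)) * (c j * x j) :=
      fun i j => by ring
    simp_rw [expand, Finset.sum_sub_distrib, Finset.sum_add_distrib, sum_sum_mul', hc]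
    have h2 : ∑ i, 2 * (c i * x i) = 2 * ∑ i, c i * x i := by rw [Finset.mul_sum]
    rw [h2]
    nlinarith [sq_nonneg (∑ i, c i * x i)]
lemma sf_B {θ p : ℝ} (hθ : 0 ≤ θ) (hp0 : 0 < p) (hp2 : p ≤ 2) {n : ℕ} (x : Fin n → ℝ) :
    SF (fun i j => θ * |x i| ^ p + θ * |x j| ^ p - θ * |x i - x j| ^ p) := by
  intro c
  have hd : ∑ i : Fin (n+1), Fin.cons (-(∑ i, c i)) c i = 0 := by
    rw [Fin.sum_univ_succ]
    simp
  have h := nd hp0 hp2 (Fin.cons (0:ℝ) x) (Fin.cons (-(∑ i, c i)) c) hd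
  have hexp : ∑ i : Fin (n+1), ∑ j : Fin (n+1), (Fin.cons (-(∑ i, c i)) c : Fin (n+1) → ℝ) i
        * (Fin.cons (-(∑ i, c i)) c : Fin (n+1) → ℝ) j
        * |(Fin.cons (0:ℝ) x : Fin (n+1) → ℝ) i - (Fin.cons (0:ℝ) x : Fin (n+1) → ℝ) j| ^ p
      = (∑ i, ∑ j, c i * c j * |x i - x j| ^ p)
        - 2 * (∑ i, c i) * (∑ i, c i * |x i| ^ p) := by
    rw [Fin.sum_univ_succ, Fin.sum_univ_succ]
    simp only [Fin.cons_zero, Fin.cons_succ, sub_self, abs_zero,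
      Real.zero_rpow hp0.ne', mul_zero]
    have h1 : ∀ j : Fin n, -(∑ i, c i) * c j * |0 - x j| ^ p
        = -(∑ i, c i) * (c j * |x j| ^ p) := by
      intro j; rw [zero_sub, abs_neg]; ring
    have h2 : ∀ i : Fin n, ∑ j : Fin (n+1), c i * (Fin.cons (-(∑ i, c i)) c : Fin (n+1) → ℝ) j
          * |x i - (Fin.cons (0:ℝ) x : Fin (n+1) → ℝ) j| ^ p
        = -(∑ i, c i) * (c i * |x i| ^ p) + ∑ j : Fin n, c i * c j * |x i - x j| ^ p := by
      intro i
      rw [Fin.sum_univ_succ]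
      simp only [Fin.cons_zero, Fin.cons_succ, sub_zero]
      ring
    simp_rw [h1, h2]
    rw [← Finset.mul_sum, Finset.sum_add_distrib, ← Finset.mul_sum]
    ring
  rw [hexp] at h
  have key : ∑ i, ∑ j, c i * c j * (θ * |x i| ^ p + θ * |x j| ^ p - θ * |x i - x j| ^ p)
      = θ * (2 * (∑ i, c i) * (∑ i, c i * |x i| ^ p)
          - ∑ i, ∑ j, c i * c j * |x i - x j| ^ p) := by
    have expand : ∀ i j : Fin n, c i * c j * (θ * |x i| ^ p + θ * |x j| ^ p - θ * |x i - x j| ^ p)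
        = θ * ((c i * |x i| ^ p) * c j + c i * (c j * |x j| ^ p) - c i * c j * |x i - x j| ^ p) :=
      fun i j => by ring
    simp_rw [expand, ← Finset.mul_sum, Finset.sum_sub_distrib,
      Finset.sum_add_distrib, sum_sum_mul']
    ring
  rw [key]
  exact mul_nonneg hθ (by linarith)

/-- The one-dimensional generalized exponential correlation function
`R(x,u) = exp(-θ |x-u|^p)` with `θ ≥ 0` and `0 < p ≤ 2` is a positive
semidefinite kernel on `ℝ`. -/
theorem genExp_kernel_posSemidef
    (θ p : ℝ) (hθ : 0 ≤ θ) (hp0 : 0 < p) (hp2 : p ≤ 2)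
    (n : ℕ) (x : Fin n → ℝ) (c : Fin n → ℝ) :
    0 ≤ ∑ i, ∑ j, c i * c j * Real.exp (-θ * |x i - x j| ^ p) := by
  have hsym : ∀ i j : Fin n, (θ * |x i| ^ p + θ * |x j| ^ p - θ * |x i - x j| ^ p)
      = (θ * |x j| ^ p + θ * |x i| ^ p - θ * |x j - x i| ^ p) := by
    intro i j; rw [abs_sub_comm]; ring
  have hgram := gram_of_sf
    (A := fun i j => θ * |x i| ^ p + θ * |x j| ^ p - θ * |x i - x j| ^ p)
    (fun i j => hsym i j) (sf_B hθ hp0 hp2 x)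
  have h := sf_exp hgram (fun i => c i * Real.exp (-θ * |x i| ^ p))
  have heq : ∀ i j : Fin n,
      (c i * Real.exp (-θ * |x i| ^ p)) * (c j * Real.exp (-θ * |x j| ^ p))
        * Real.exp (θ * |x i| ^ p + θ * |x j| ^ p - θ * |x i - x j| ^ p)
      = c i * c j * Real.exp (-θ * |x i - x j| ^ p) := by
    intro i j
    have hmul : Real.exp (-θ * |x i| ^ p) * Real.exp (-θ * |x j| ^ p)
        * Real.exp (θ * |x i| ^ p + θ * |x j| ^ p - θ * |x i - x j| ^ p)
        = Real.exp (-θ * |x i - x j| ^ p) := by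
      rw [← Real.exp_add, ← Real.exp_add]
      congr 1
      ring
    calc (c i * Real.exp (-θ * |x i| ^ p)) * (c j * Real.exp (-θ * |x j| ^ p))
          * Real.exp (θ * |x i| ^ p + θ * |x j| ^ p - θ * |x i - x j| ^ p)
        = c i * c j * (Real.exp (-θ * |x i| ^ p) * Real.exp (-θ * |x j| ^ p)
            * Real.exp (θ * |x i| ^ p + θ * |x j| ^ p - θ * |x i - x j| ^ p)) := by ring
      _ = c i * c j * Real.exp (-θ * |x i - x j| ^ p) := by rw [hmul]
  have hrw : ∑ i, ∑ j, c i * c j * Real.exp (-θ * |x i - x j| ^ p)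
      = ∑ i, ∑ j, (c i * Real.exp (-θ * |x i| ^ p)) * (c j * Real.exp (-θ * |x j| ^ p))
          * Real.exp (θ * |x i| ^ p + θ * |x j| ^ p - θ * |x i - x j| ^ p) :=
    Finset.sum_congr rfl fun i _ => Finset.sum_congr rfl fun j _ => (heq i j).symm
  rw [hrw]
  simpa using h
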